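/- Let p be a prime with p ≡ 1 (mod 4). Assume the Weil-type bound: for every nonempty S ⊆ F_p, |∑_{i ∈ F_p} χ(∏_{j ∈ S}(i − j))| ≤ (|S| − 1)√p + 1, where χ is the Legendre character. Then for every nonempty subset S of vertices of the Paley graph Pal_p, |S ∪ Odd(S)| ≥ √p − 1/2 and |S ∪ Even(S)| ≥ √p − 1/2. -/

import Mathlib

/-- Odd neighborhood. -/
def oddNbhd {V : Type*} (G : SimpleGraph V) (S : Set V) : Set V :=
  {v | Odd ((G.neighborSet v ∩ S).ncard)}

/-- Even neighborhood. -/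
def evenNbhd {V : Type*} (G : SimpleGraph V) (S : Set V) : Set V :=
  {v | Even ((G.neighborSet v ∩ S).ncard)}

/-- The Paley graph on `ZMod p`. -/
def paley (p : ℕ) [Fact p.Prime] : SimpleGraph (ZMod p) where
  Adj i j := i ≠ j ∧ IsSquare (i - j) ∧ IsSquare (j - i)
  symm := ⟨fun _ _ ⟨h, a, b⟩ => ⟨h.symm, b, a⟩⟩
  loopless := ⟨fun _ ⟨h, _⟩ => h rfl⟩

lemma key_arith {p s t q : ℝ} (hq0 : 0 ≤ q) (hq : q ^ 2 = p) (hs1 : 1 ≤ s) (hst : s ≤ t)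
    (hp5 : 5 ≤ p) (h : |p + s - 2 * t| ≤ (s - 1) * q + 1) : q - 1/2 ≤ t := by
  have hq1 : 1 ≤ q := by nlinarith
  rcases abs_le.mp h with ⟨h1, h2⟩
  rcases le_or_gt (p + s) (2 * t) with hc | hc
  · nlinarith
  · nlinarith

theorem paley_odd_even_lower_bound (p : ℕ) [Fact p.Prime] (hp4 : p % 4 = 1)
    (hWeil : ∀ S : Finset (ZMod p), S.Nonempty →
      (|∑ i : ZMod p, quadraticChar (ZMod p) (∏ j ∈ S, (i - j))| : ℝ) ≤
        ((S.card : ℝ) - 1) * Real.sqrt p + 1) :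
    ∀ S : Finset (ZMod p), S.Nonempty →
      Real.sqrt p - 1/2 ≤ (((↑S : Set (ZMod p)) ∪ oddNbhd (paley p) ↑S).ncard : ℝ) ∧
      Real.sqrt p - 1/2 ≤ (((↑S : Set (ZMod p)) ∪ evenNbhd (paley p) ↑S).ncard : ℝ) := by
  intro S hS
  classical
  have hp : p.Prime := Fact.out
  have hp5 : 5 ≤ p := by
    have h2 := hp.two_le
    rcases Nat.lt_or_ge p 5 with h | h
    · interval_cases p <;> omega
    · exact h
  set a : ZMod p → ℕ := fun v => (S.filter fun j => (paley p).Adj v j).card with ha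
  have hsqneg : IsSquare (-1 : ZMod p) := by
    rw [ZMod.exists_sq_eq_neg_one_iff]; omega
  have hadj : ∀ i j : ZMod p, (paley p).Adj i j ↔ i ≠ j ∧ IsSquare (i - j) := by
    intro i j
    constructor
    · rintro ⟨h, h1, _⟩; exact ⟨h, h1⟩
    · rintro ⟨h, h1⟩
      exact ⟨h, h1, by
        rw [show j - i = -1 * (i - j) by ring]; exact hsqneg.mul h1⟩
  have hchar : ∀ i j : ZMod p, i ≠ j →
      quadraticChar (ZMod p) (i - j) = if (paley p).Adj i j then 1 else -1 := by
    intro i j hij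
    have hz : i - j ≠ 0 := sub_ne_zero.mpr hij
    by_cases h : (paley p).Adj i j
    · simp only [h, if_true]
      exact (quadraticChar_one_iff_isSquare hz).mpr ((hadj i j).mp h).2
    · simp only [h, if_false]
      exact quadraticChar_neg_one_iff_not_isSquare.mpr
        (fun hsq => h ((hadj i j).mpr ⟨hij, hsq⟩))
  -- value of summand off S
  have hf : ∀ i : ZMod p, i ∉ S →
      quadraticChar (ZMod p) (∏ j ∈ S, (i - j)) = (-1) ^ S.card * (-1) ^ (a i) := by
    intro i hi
    rw [map_prod]
    have h1 : ∀ j ∈ S, quadraticChar (ZMod p) (i - j)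
        = if (paley p).Adj i j then (1 : ℤ) else -1 := by
      intro j hj
      exact hchar i j (fun h => hi (h ▸ hj))
    rw [Finset.prod_congr rfl h1, Finset.prod_ite, Finset.prod_const, Finset.prod_const,
      one_pow, one_mul]
    have hcard : a i + (S.filter fun j => ¬ (paley p).Adj i j).card = S.card :=
      Finset.card_filter_add_card_filter_not _
    have heven : ((-1 : ℤ)) ^ (a i) * (-1) ^ (a i) = 1 := by
      rw [← pow_add]
      exact Even.neg_one_pow ⟨a i, rfl⟩
    calc ((-1 : ℤ)) ^ (S.filter fun j => ¬ (paley p).Adj i j).card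
        = (-1) ^ (a i + (S.filter fun j => ¬ (paley p).Adj i j).card) * (-1) ^ (a i) := by
          rw [pow_add]
          linear_combination (-((-1 : ℤ) ^ (S.filter fun j => ¬ (paley p).Adj i j).card)) * heven
      _ = (-1) ^ S.card * (-1) ^ (a i) := by rw [hcard]
  -- partition
  set O : Finset (ZMod p) := Finset.univ.filter fun v => Odd (a v) with hO
  set t := (S ∪ O).card with htdef
  set t' := (S ∪ Oᶜ).card with ht'def
  have htt' : t + t' = p + S.card := by
    have h1 := Finset.card_union_add_card_inter (S ∪ O) (S ∪ Oᶜ)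
    have h2 : (S ∪ O) ∪ (S ∪ Oᶜ) = Finset.univ := by
      ext v; simp [Finset.mem_union]; tauto
    have h3 : (S ∪ O) ∩ (S ∪ Oᶜ) = S := by
      ext v; simp [Finset.mem_union, Finset.mem_inter]; tauto
    rw [h2, h3, Finset.card_univ, ZMod.card] at h1
    omega
  have hsle : S.card ≤ t := Finset.card_le_card Finset.subset_union_left
  have hsle' : S.card ≤ t' := Finset.card_le_card Finset.subset_union_left
  -- compute the character sum
  have hsum : ∑ i : ZMod p, quadraticChar (ZMod p) (∏ j ∈ S, (i - j))
      = (-1) ^ S.card * ((t' : ℤ) - t) := by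
    rw [← Finset.sum_add_sum_compl S]
    have hz : ∀ i ∈ S, quadraticChar (ZMod p) (∏ j ∈ S, (i - j)) = 0 := by
      intro i hi
      rw [Finset.prod_eq_zero hi (sub_self i), quadraticChar_zero]
    rw [Finset.sum_eq_zero hz, zero_add]
    have hv : ∀ i ∈ Sᶜ, quadraticChar (ZMod p) (∏ j ∈ S, (i - j))
        = (-1) ^ S.card * (if Odd (a i) then (-1 : ℤ) else 1) := by
      intro i hi
      rw [hf i (Finset.mem_compl.mp hi)]
      congr 1
      by_cases h : Odd (a i)
      · rw [if_pos h, h.neg_one_pow]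
      · rw [if_neg h, (Nat.not_odd_iff_even.mp h).neg_one_pow]
    rw [Finset.sum_congr rfl hv, ← Finset.mul_sum]
    congr 1
    rw [Finset.sum_ite, Finset.sum_const, Finset.sum_const]
    have hOd : Sᶜ.filter (fun i => Odd (a i)) = O \ S := by
      ext v; simp [hO, Finset.mem_sdiff, Finset.mem_filter, Finset.mem_compl]; tauto
    have hEv : Sᶜ.filter (fun i => ¬ Odd (a i)) = Oᶜ \ S := by
      ext v; simp [hO, Finset.mem_sdiff, Finset.mem_filter, Finset.mem_compl]; tauto
    have c1 : (O \ S).card + S.card = t := by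
      rw [htdef, Finset.union_comm]
      exact Finset.card_sdiff_add_card O S
    have c2 : (Oᶜ \ S).card + S.card = t' := by
      rw [ht'def, Finset.union_comm]
      exact Finset.card_sdiff_add_card Oᶜ S
    rw [hOd, hEv]
    simp only [nsmul_eq_mul, mul_neg_one, mul_one]
    have c1' : ((O \ S).card : ℤ) = (t : ℤ) - S.card := by exact_mod_cast by omega
    have c2' : ((Oᶜ \ S).card : ℤ) = (t' : ℤ) - S.card := by exact_mod_cast by omega
    rw [c1', c2']
    ring
  -- apply Weil bound
  have habs : |(p : ℝ) + S.card - 2 * t| ≤ ((S.card : ℝ) - 1) * Real.sqrt p + 1 := by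
    have h1 := hWeil S hS
    have h2 : |∑ i : ZMod p, ((quadraticChar (ZMod p) (∏ j ∈ S, (i - j)) : ℤ) : ℝ)|
        = |(p : ℝ) + S.card - 2 * t| := by
      rw [show (∑ i : ZMod p, ((quadraticChar (ZMod p) (∏ j ∈ S, (i - j)) : ℤ) : ℝ))
          = (((-1) ^ S.card * ((t' : ℤ) - t) : ℤ) : ℝ) from by rw [← hsum]; push_cast; rfl]
      push_cast
      rw [abs_mul, abs_pow, abs_neg, abs_one, one_pow, one_mul]
      congr 1
      have htt : (t : ℝ) + t' = p + S.card := by exact_mod_cast htt'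
      linarith
    rwa [h2] at h1
  -- identify the sets
  have hnbhd : ∀ v : ZMod p, ((paley p).neighborSet v ∩ ↑S).ncard = a v := by
    intro v
    have : (paley p).neighborSet v ∩ ↑S = ↑(S.filter fun j => (paley p).Adj v j) := by
      ext u
      simp [SimpleGraph.mem_neighborSet, and_comm]
    rw [this, Set.ncard_coe_finset]
  have hOddSet : (↑S : Set (ZMod p)) ∪ oddNbhd (paley p) ↑S = ↑(S ∪ O) := by
    ext v
    simp only [oddNbhd, Set.mem_union, Set.mem_setOf_eq, hnbhd, Finset.coe_union,
      Finset.mem_coe, hO, Finset.mem_filter, Finset.mem_univ, true_and]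
  have hEvenSet : (↑S : Set (ZMod p)) ∪ evenNbhd (paley p) ↑S = ↑(S ∪ Oᶜ) := by
    ext v
    simp only [evenNbhd, Set.mem_union, Set.mem_setOf_eq, hnbhd, Finset.coe_union,
      Finset.mem_coe, hO, Finset.mem_compl, Finset.mem_filter, Finset.mem_univ, true_and,
      Nat.not_odd_iff_even]
  have hs1 : 1 ≤ S.card := Finset.card_pos.mpr hS
  have hq : Real.sqrt p ^ 2 = (p : ℝ) := Real.sq_sqrt (by positivity)
  have hp5' : (5 : ℝ) ≤ p := by exact_mod_cast hp5
  constructor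
  · rw [hOddSet, Set.ncard_coe_finset]
    exact key_arith (Real.sqrt_nonneg p) hq (by exact_mod_cast hs1) (by exact_mod_cast hsle)
      hp5' habs
  · rw [hEvenSet, Set.ncard_coe_finset]
    have habs' : |(p : ℝ) + S.card - 2 * t'| ≤ ((S.card : ℝ) - 1) * Real.sqrt p + 1 := by
      have : (p : ℝ) + S.card - 2 * t' = -((p : ℝ) + S.card - 2 * t) := by
        have : (t : ℝ) + t' = p + S.card := by exact_mod_cast htt'
        linarith
      rw [this, abs_neg]
      exact habs
    exact key_arith (Real.sqrt_nonneg p) hq (by exact_mod_cast hs1) (by exact_mod_cast hsle')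
      hp5' habs'
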